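/- Let y, r ∈ (0,1] and ε ∈ (0,1). Write H(ε) = M_B(y(1 + rε)/(1 + ε), y/(1 + ε)). Then for 0 < y < 1 − ε, (1 − ε²)·(H(ε) − H(−ε)) equals 2·Σ_{k≥1} C(r, y, 2k+1)·(1−y)^{−2k}·ε^{2k+1}, where each coefficient C(r, y, ℓ) ≥ 0 for r ∈ [0,1], y ∈ [0,1], ℓ > 2; in particular H(ε) ≥ H(−ε). -/

import Mathlib

noncomputable def MB (z θ : ℝ) : ℝ :=
  z * Real.log (θ / z) + (1 - z) * Real.log ((1 - θ) / (1 - z))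

/-- The series coefficients `C(r, y, ℓ)` (for `ℓ > 2`). -/
noncomputable def Cser (r y : ℝ) (ℓ : ℕ) : ℝ :=
  r ^ (ℓ - 2) * (1 - y) ^ (ℓ - 1) / ((ℓ : ℝ) - 2) - r ^ ℓ * (1 - y) ^ (ℓ - 1) / ℓ -
    ((1 - r * y) * (1 - y) / ((ℓ : ℝ) - 2)) *
      (r ^ (ℓ - 2) * (1 - y) ^ (ℓ - 2) + 1 - (1 - r * y) ^ (ℓ - 2)) +
    (1 / (ℓ : ℝ)) * (r ^ ℓ * (1 - y) ^ ℓ + 1 - (1 - r * y) ^ ℓ) -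
    ((1 - r) * y / ((ℓ : ℝ) - 1)) *
      (r ^ (ℓ - 1) * (1 - y) ^ (ℓ - 1) + 1 - (1 - r * y) ^ (ℓ - 1))

/-- `H(ε) = M_B(y(1 + rε)/(1 + ε), y/(1 + ε))`. -/
noncomputable def Hfun (y r ε : ℝ) : ℝ := MB (y * (1 + r * ε) / (1 + ε)) (y / (1 + ε))

/-! ### Auxiliary series machinery -/

noncomputable def W (u : ℝ) (n : ℕ) : ℝ := -(-u) ^ n / n

lemma W_zero (u : ℝ) : W u 0 = 0 := by simp [W]

lemma W_odd (u : ℝ) {n : ℕ} (h : Odd n) : W u n = u ^ n / n := by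
  unfold W; rw [h.neg_pow]; ring

lemma W_even (u : ℝ) {n : ℕ} (h : Even n) : W u n = -(u ^ n / n) := by
  unfold W; rw [h.neg_pow]; ring

lemma hasSum_W {u : ℝ} (h : |u| < 1) : HasSum (W u) (Real.log (1 + u)) := by
  have h' : |(-u)| < 1 := by rwa [abs_neg]
  have h0 := (Real.hasSum_pow_div_log_of_abs_lt_one h').neg
  rw [neg_neg, sub_neg_eq_add] at h0
  have h2 : HasSum (fun n => W u (n + 1)) (Real.log (1 + u)) := by
    refine h0.congr_fun fun n => ?_
    unfold W; push_cast; ring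
  have h3 := (hasSum_nat_add_iff (f := W u) 1).mp h2
  simpa [W_zero] using h3

lemma hasSum_W_shift1 {u : ℝ} (h : |u| < 1) :
    HasSum (fun n => W u (n - 1)) (Real.log (1 + u)) := by
  have h2 : HasSum (fun n => W u ((n + 1) - 1)) (Real.log (1 + u)) := by
    simpa using hasSum_W h
  have h3 := (hasSum_nat_add_iff (f := fun n => W u (n - 1)) 1).mp h2
  simpa [W_zero] using h3

lemma hasSum_W_shift2 {u : ℝ} (h : |u| < 1) :
    HasSum (fun n => W u (n - 2)) (Real.log (1 + u)) := by
  have h2 : HasSum (fun n => W u ((n + 2) - 2)) (Real.log (1 + u)) := by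
    simpa using hasSum_W h
  have h3 := (hasSum_nat_add_iff (f := fun n => W u (n - 2)) 2).mp h2
  simpa [Finset.sum_range_succ, W_zero] using h3

noncomputable def coefLog (q0 q1 q2 ε u : ℝ) (n : ℕ) : ℝ :=
  q0 * W u n + q1 * ε * W u (n - 1) + q2 * ε ^ 2 * W u (n - 2)

lemma hasSum_coefLog (q0 q1 q2 ε : ℝ) {u : ℝ} (h : |u| < 1) :
    HasSum (coefLog q0 q1 q2 ε u) ((q0 + q1 * ε + q2 * ε ^ 2) * Real.log (1 + u)) := by
  have h0 := (hasSum_W h).mul_left q0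
  have h1 := (hasSum_W_shift1 h).mul_left (q1 * ε)
  have h2 := (hasSum_W_shift2 h).mul_left (q2 * ε ^ 2)
  have h3 := (h0.add h1).add h2
  have e : (q0 + q1 * ε + q2 * ε ^ 2) * Real.log (1 + u) =
      q0 * Real.log (1 + u) + q1 * ε * Real.log (1 + u) + q2 * ε ^ 2 * Real.log (1 + u) := by
    ring
  rw [e]
  exact h3

/-! ### The combined coefficient function -/

noncomputable def Gaux (y r ε : ℝ) (n : ℕ) : ℝ :=
  coefLog (-y) (-(y * (r - 1))) (y * r) ε (r * ε) n
    + coefLog y (y * (1 - r)) (-(y * r)) ε (-(r * ε)) n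
    + coefLog (1 - y) (y - r * y) (-(1 - r * y)) ε (ε * (1 - y)⁻¹) n
    + coefLog (-(1 - y)) (y - r * y) (1 - r * y) ε (-(ε * (1 - y)⁻¹)) n
    + coefLog (-(1 - y)) (r * y - y) (1 - r * y) ε (ε * ((1 - r * y) * (1 - y)⁻¹)) n
    + coefLog (1 - y) (r * y - y) (-(1 - r * y)) ε (-(ε * ((1 - r * y) * (1 - y)⁻¹))) n

lemma Cser_odd (r y : ℝ) (k : ℕ) : Cser r y (2 * k + 3) =
    r ^ (2 * k + 1) * (1 - y) ^ (2 * k + 2) / (2 * (k : ℝ) + 1)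
      - r ^ (2 * k + 3) * (1 - y) ^ (2 * k + 2) / (2 * (k : ℝ) + 3)
      - ((1 - r * y) * (1 - y) / (2 * (k : ℝ) + 1)) *
          (r ^ (2 * k + 1) * (1 - y) ^ (2 * k + 1) + 1 - (1 - r * y) ^ (2 * k + 1))
      + (1 / (2 * (k : ℝ) + 3)) *
          (r ^ (2 * k + 3) * (1 - y) ^ (2 * k + 3) + 1 - (1 - r * y) ^ (2 * k + 3))
      - ((1 - r) * y / (2 * (k : ℝ) + 2)) *
          (r ^ (2 * k + 2) * (1 - y) ^ (2 * k + 2) + 1 - (1 - r * y) ^ (2 * k + 2)) := by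
  unfold Cser
  have h1 : 2 * k + 3 - 2 = 2 * k + 1 := by omega
  have h2 : 2 * k + 3 - 1 = 2 * k + 2 := by omega
  rw [h1, h2]
  push_cast
  ring

set_option maxHeartbeats 1000000 in
lemma odd_core (r y ε : ℝ) (hA : (1:ℝ) - y ≠ 0) (k : ℕ) :
    2 * y * (-((r * ε) ^ (2 * k + 3) / (2 * (k:ℝ) + 3))
        + (r - 1) * ε * (r * ε) ^ (2 * k + 2) / (2 * (k:ℝ) + 2)
        + r * ε ^ 2 * (r * ε) ^ (2 * k + 1) / (2 * (k:ℝ) + 1))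
    + 2 * ((1 - y) * (ε * (1 - y)⁻¹) ^ (2 * k + 3) / (2 * (k:ℝ) + 3)
        - (y - r * y) * ε * (ε * (1 - y)⁻¹) ^ (2 * k + 2) / (2 * (k:ℝ) + 2)
        - (1 - r * y) * ε ^ 2 * (ε * (1 - y)⁻¹) ^ (2 * k + 1) / (2 * (k:ℝ) + 1))
    + 2 * (-((1 - y) * (ε * ((1 - r * y) * (1 - y)⁻¹)) ^ (2 * k + 3) / (2 * (k:ℝ) + 3))
        - (r * y - y) * ε * (ε * ((1 - r * y) * (1 - y)⁻¹)) ^ (2 * k + 2) / (2 * (k:ℝ) + 2)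
        + (1 - r * y) * ε ^ 2 * (ε * ((1 - r * y) * (1 - y)⁻¹)) ^ (2 * k + 1) / (2 * (k:ℝ) + 1))
    = 2 * (Cser r y (2 * k + 3) * ((1 - y) ^ (2 * k + 2))⁻¹ * ε ^ (2 * k + 3)) := by
  rw [Cser_odd]
  have p3 : ∀ x : ℝ, x ^ (2 * k + 3) = x ^ (2 * k + 1) * x ^ 2 := fun x => by ring
  have p2 : ∀ x : ℝ, x ^ (2 * k + 2) = x ^ (2 * k + 1) * x := fun x => by ring
  simp only [mul_pow, inv_pow, p3, p2]
  have hd1 : (2 * (k : ℝ) + 1) ≠ 0 := by positivity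
  have hd2 : (2 * (k : ℝ) + 2) ≠ 0 := by positivity
  have hd3 : (2 * (k : ℝ) + 3) ≠ 0 := by positivity
  generalize hA1g : (1 - y) ^ (2 * k + 1) = A1
  have hA1 : A1 ≠ 0 := hA1g ▸ pow_ne_zero _ hA
  generalize r ^ (2 * k + 1) = R
  generalize ε ^ (2 * k + 1) = E
  generalize (1 - r * y) ^ (2 * k + 1) = U1
  field_simp
  ring

lemma Gaux_odd (r y ε : ℝ) (hA : (1:ℝ) - y ≠ 0) (k : ℕ) :
    Gaux y r ε (2 * (k + 1) + 1)
      = 2 * (Cser r y (2 * (k + 1) + 1) * ((1 - y) ^ (2 * (k + 1)))⁻¹ * ε ^ (2 * (k + 1) + 1)) := by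
  have hn1 : 2 * (k + 1) + 1 = 2 * k + 3 := by omega
  have hn2 : 2 * (k + 1) = 2 * k + 2 := by omega
  unfold Gaux
  rw [hn1, hn2, ← odd_core r y ε hA k]
  have e1 : 2 * k + 3 - 1 = 2 * k + 2 := by omega
  have e2 : 2 * k + 3 - 2 = 2 * k + 1 := by omega
  have h3 : Odd (2 * k + 3) := ⟨k + 1, by omega⟩
  have h2 : Even (2 * k + 2) := ⟨k + 1, by omega⟩
  have h1 : Odd (2 * k + 1) := ⟨k, by omega⟩
  simp only [coefLog, e1, e2, W_odd _ h3, W_odd _ h1, W_even _ h2, h3.neg_pow, h1.neg_pow,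
    h2.neg_pow]
  push_cast
  ring

set_option maxHeartbeats 2000000 in
lemma Gaux_even (r y ε : ℝ) (hA : (1:ℝ) - y ≠ 0) (m : ℕ) :
    Gaux y r ε (2 * m + 4) = 0 := by
  unfold Gaux
  have e1 : 2 * m + 4 - 1 = 2 * m + 3 := by omega
  have e2 : 2 * m + 4 - 2 = 2 * m + 2 := by omega
  have h4 : Even (2 * m + 4) := ⟨m + 2, by omega⟩
  have h3 : Odd (2 * m + 3) := ⟨m + 1, by omega⟩
  have h2 : Even (2 * m + 2) := ⟨m + 1, by omega⟩
  simp only [coefLog, e1, e2, W_odd _ h3, W_even _ h4, W_even _ h2, h3.neg_pow, h4.neg_pow,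
    h2.neg_pow, mul_pow, inv_pow]
  have p4 : ∀ x : ℝ, x ^ (2 * m + 4) = x ^ (2 * m + 2) * x ^ 2 := fun x => by ring
  have p3 : ∀ x : ℝ, x ^ (2 * m + 3) = x ^ (2 * m + 2) * x := fun x => by ring
  simp only [p4, p3]
  have hd2 : (2 * (m : ℝ) + 2) ≠ 0 := by positivity
  have hd3 : (2 * (m : ℝ) + 3) ≠ 0 := by positivity
  have hd4 : (2 * (m : ℝ) + 4) ≠ 0 := by positivity
  push_cast
  generalize hA1g : (1 - y) ^ (2 * m + 2) = A1
  have hA1 : A1 ≠ 0 := hA1g ▸ pow_ne_zero _ hA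
  generalize r ^ (2 * m + 2) = R
  generalize ε ^ (2 * m + 2) = E
  generalize (1 - r * y) ^ (2 * m + 2) = U1
  field_simp
  ring

lemma Gaux_zero (r y ε : ℝ) : Gaux y r ε 0 = 0 := by
  simp [Gaux, coefLog, W_zero]

lemma Gaux_one (r y ε : ℝ) (hA : (1:ℝ) - y ≠ 0) : Gaux y r ε 1 = 0 := by
  have h1 : Odd 1 := ⟨0, by omega⟩
  simp only [Gaux, coefLog, show (1:ℕ) - 1 = 0 from rfl, show (1:ℕ) - 2 = 0 from rfl, W_zero,
    W_odd _ h1, pow_one]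
  push_cast
  field_simp
  ring

lemma Gaux_two (r y ε : ℝ) (hA : (1:ℝ) - y ≠ 0) : Gaux y r ε 2 = 0 := by
  have h1 : Odd 1 := ⟨0, by omega⟩
  have h2 : Even 2 := ⟨1, by omega⟩
  simp only [Gaux, coefLog, show (2:ℕ) - 1 = 1 from rfl, show (2:ℕ) - 2 = 0 from rfl, W_zero,
    W_odd _ h1, W_even _ h2, pow_one]
  push_cast
  field_simp
  ring

lemma Gaux_vanish (r y ε : ℝ) (hA : (1:ℝ) - y ≠ 0) :
    ∀ n ∉ Set.range (fun k : ℕ => 2 * (k + 1) + 1), Gaux y r ε n = 0 := by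
  intro n hn
  rcases Nat.even_or_odd n with ⟨j, hj⟩ | ⟨j, hj⟩
  · rcases j with _ | _ | j
    · rw [show n = 0 by omega]; exact Gaux_zero r y ε
    · rw [show n = 2 by omega]; exact Gaux_two r y ε hA
    · rw [show n = 2 * j + 4 by omega]; exact Gaux_even r y ε hA j
  · rcases j with _ | j
    · rw [show n = 1 by omega]; exact Gaux_one r y ε hA
    · exact absurd ⟨j, show 2 * (j + 1) + 1 = n by omega⟩ hn

/-! ### Logarithmic form of `Hfun` -/

lemma Hfun_log (y r ε : ℝ) (hy : 0 < y) (hA : 0 < 1 - y) (hε : 0 < 1 + ε)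
    (hrε : 0 < 1 + r * ε) (hb : 0 < 1 + ε * (1 - y)⁻¹)
    (hc : 0 < 1 + ε * ((1 - r * y) * (1 - y)⁻¹)) :
    Hfun y r ε = -(y * (1 + r * ε) / (1 + ε)) * Real.log (1 + r * ε)
      + (1 - y * (1 + r * ε) / (1 + ε)) *
        (Real.log (1 + ε * (1 - y)⁻¹) - Real.log (1 + ε * ((1 - r * y) * (1 - y)⁻¹))) := by
  have hA' := hA.ne'
  have hε' := hε.ne'
  have hrε' := hrε.ne'
  have hy' := hy.ne'
  have hb' := hb.ne'
  have hc' := hc.ne'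
  unfold Hfun MB
  have e1 : y / (1 + ε) / (y * (1 + r * ε) / (1 + ε)) = (1 + r * ε)⁻¹ := by
    field_simp
  have eθ : 1 - y / (1 + ε) = (1 - y) * (1 + ε * (1 - y)⁻¹) / (1 + ε) := by
    field_simp
    ring
  have ez : 1 - y * (1 + r * ε) / (1 + ε) =
      (1 - y) * (1 + ε * ((1 - r * y) * (1 - y)⁻¹)) / (1 + ε) := by
    field_simp
    ring
  have e2 : (1 - y / (1 + ε)) / (1 - y * (1 + r * ε) / (1 + ε)) =
      (1 + ε * (1 - y)⁻¹) / (1 + ε * ((1 - r * y) * (1 - y)⁻¹)) := by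
    rw [eθ, ez]
    field_simp
  rw [e1, e2, Real.log_inv, Real.log_div hb' hc']
  ring

/-! ### The `HasSum` statement -/

set_option maxHeartbeats 2000000 in
lemma Gaux_hasSum (y r ε : ℝ) (hy0 : 0 < y) (hr0 : 0 < r) (hr1 : r ≤ 1) (hε0 : 0 < ε)
    (hε1 : ε < 1) (hyε : y < 1 - ε) :
    HasSum (Gaux y r ε) ((1 - ε ^ 2) * (Hfun y r ε - Hfun y r (-ε))) := by
  have hA : 0 < 1 - y := by linarith
  have hA' : (1:ℝ) - y ≠ 0 := hA.ne'
  have hry : 0 < 1 - r * y := by nlinarith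
  have hrε1 : r * ε < 1 := by nlinarith
  have hrε0 : 0 < r * ε := by positivity
  have hb0 : 0 < ε * (1 - y)⁻¹ := by positivity
  have hb1 : ε * (1 - y)⁻¹ < 1 := by
    rw [← div_eq_mul_inv, div_lt_one hA]; linarith
  have hc0 : 0 < ε * ((1 - r * y) * (1 - y)⁻¹) := by positivity
  have hcb : ε * ((1 - r * y) * (1 - y)⁻¹) ≤ ε * (1 - y)⁻¹ := by
    apply mul_le_mul_of_nonneg_left _ hε0.le
    apply mul_le_of_le_one_left (by positivity)
    nlinarith
  have habs1 : |r * ε| < 1 := abs_lt.2 ⟨by nlinarith, hrε1⟩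
  have habs2 : |(-(r * ε))| < 1 := by rwa [abs_neg]
  have habs3 : |ε * (1 - y)⁻¹| < 1 := abs_lt.2 ⟨by nlinarith, hb1⟩
  have habs4 : |(-(ε * (1 - y)⁻¹))| < 1 := by rwa [abs_neg]
  have habs5 : |ε * ((1 - r * y) * (1 - y)⁻¹)| < 1 := abs_lt.2 ⟨by nlinarith, by linarith⟩
  have habs6 : |(-(ε * ((1 - r * y) * (1 - y)⁻¹)))| < 1 := by rwa [abs_neg]
  have H1 := hasSum_coefLog (-y) (-(y * (r - 1))) (y * r) ε habs1
  have H2 := hasSum_coefLog y (y * (1 - r)) (-(y * r)) ε habs2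
  have H3 := hasSum_coefLog (1 - y) (y - r * y) (-(1 - r * y)) ε habs3
  have H4 := hasSum_coefLog (-(1 - y)) (y - r * y) (1 - r * y) ε habs4
  have H5 := hasSum_coefLog (-(1 - y)) (r * y - y) (1 - r * y) ε habs5
  have H6 := hasSum_coefLog (1 - y) (r * y - y) (-(1 - r * y)) ε habs6
  have Htot := ((((H1.add H2).add H3).add H4).add H5).add H6
  have hH1 := Hfun_log y r ε hy0 hA (by linarith) (by linarith) (by linarith) (by linarith)
  have hH2 := Hfun_log y r (-ε) hy0 hA (by linarith) (by nlinarith) (by nlinarith)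
    (by nlinarith)
  rw [show (1 + r * -ε : ℝ) = 1 + -(r * ε) from by ring,
    show (1 + -ε * (1 - y)⁻¹ : ℝ) = 1 + -(ε * (1 - y)⁻¹) from by ring,
    show (1 + -ε * ((1 - r * y) * (1 - y)⁻¹) : ℝ)
      = 1 + -(ε * ((1 - r * y) * (1 - y)⁻¹)) from by ring] at hH2
  have hεp : (1 : ℝ) + ε ≠ 0 := by positivity
  have hεm : (1 : ℝ) + -ε ≠ 0 := by
    intro h; nlinarith [h]
  convert Htot using 1
  · rfl
  rw [hH1, hH2]
  field_simp
  ring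

set_option maxHeartbeats 1000000 in
lemma Cser_decomp (r y : ℝ) (m : ℕ) : Cser r y (m + 3) =
    (1 - y) / ((m : ℝ) + 1) *
        (r * y + y * r ^ (m + 2) * (1 - y) ^ (m + 1) / ((m : ℝ) + 2)
          + ((1 - r * y) ^ (m + 2) - 1) / ((m : ℝ) + 2))
      + 1 / ((m : ℝ) + 2) *
        (r * y + y * r ^ (m + 3) * (1 - y) ^ (m + 2) / ((m : ℝ) + 3)
          + ((1 - r * y) ^ (m + 3) - 1) / ((m : ℝ) + 3)) := by
  unfold Cser
  have h1 : m + 3 - 2 = m + 1 := by omega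
  have h2 : m + 3 - 1 = m + 2 := by omega
  rw [h1, h2]
  have p2 : ∀ x : ℝ, x ^ (m + 2) = x ^ (m + 1) * x := fun x => by ring
  have p3 : ∀ x : ℝ, x ^ (m + 3) = x ^ (m + 1) * x ^ 2 := fun x => by ring
  simp only [p2, p3]
  have hd1 : ((m : ℝ) + 1) ≠ 0 := by positivity
  have hd2 : ((m : ℝ) + 2) ≠ 0 := by positivity
  have hd3 : ((m : ℝ) + 3) ≠ 0 := by positivity
  push_cast
  generalize r ^ (m + 1) = R
  generalize (1 - y) ^ (m + 1) = A1
  generalize (1 - r * y) ^ (m + 1) = U1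
  rw [show ((m:ℝ) + 3 - 2) = (m:ℝ) + 1 from by ring, show ((m:ℝ) + 3 - 1) = (m:ℝ) + 2 from by ring]
  field_simp
  ring

lemma Cser_nonneg (r y : ℝ) (ℓ : ℕ) (hr0 : 0 ≤ r) (hr1 : r ≤ 1) (hy0 : 0 ≤ y)
    (hy1 : y ≤ 1) (hℓ : 2 < ℓ) : 0 ≤ Cser r y ℓ := by
  obtain ⟨m, rfl⟩ : ∃ m, ℓ = m + 3 := ⟨ℓ - 3, by omega⟩
  rw [Cser_decomp]
  have hry0 : 0 ≤ r * y := mul_nonneg hr0 hy0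
  have hry1 : r * y ≤ 1 := mul_le_one₀ hr1 hy0 hy1
  have hA : (0:ℝ) ≤ 1 - y := by linarith
  have bern : ∀ n : ℕ, 0 ≤ r * y + ((1 - r * y) ^ n - 1) / n := by
    intro n
    rcases Nat.eq_zero_or_pos n with hn | hn
    · subst hn; simpa using hry0
    have hb := one_add_mul_le_pow (a := -(r * y)) (by linarith) n
    rw [show (1 : ℝ) + -(r * y) = 1 - r * y from by ring] at hb
    have hn' : (0:ℝ) < n := by exact_mod_cast hn
    have : 0 ≤ ((1 - r * y) ^ n - 1) / n + r * y := by
      rw [div_add' _ _ _ hn'.ne']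
      apply div_nonneg _ hn'.le
      nlinarith
    linarith
  have t1 : 0 ≤ r * y + y * r ^ (m + 2) * (1 - y) ^ (m + 1) / ((m : ℝ) + 2)
      + ((1 - r * y) ^ (m + 2) - 1) / ((m : ℝ) + 2) := by
    have h1 := bern (m + 2)
    have h2 : 0 ≤ y * r ^ (m + 2) * (1 - y) ^ (m + 1) / ((m : ℝ) + 2) := by positivity
    push_cast at h1
    linarith
  have t2 : 0 ≤ r * y + y * r ^ (m + 3) * (1 - y) ^ (m + 2) / ((m : ℝ) + 3)
      + ((1 - r * y) ^ (m + 3) - 1) / ((m : ℝ) + 3) := by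
    have h1 := bern (m + 3)
    have h2 : 0 ≤ y * r ^ (m + 3) * (1 - y) ^ (m + 2) / ((m : ℝ) + 3) := by positivity
    push_cast at h1
    linarith
  have hc1 : (0:ℝ) ≤ (1 - y) / ((m : ℝ) + 1) := by positivity
  have hc2 : (0:ℝ) ≤ 1 / ((m : ℝ) + 2) := by positivity
  exact add_nonneg (mul_nonneg hc1 t1) (mul_nonneg hc2 t2)

theorem H_series_and_nonneg (y r ε : ℝ) (hy0 : 0 < y) (hy1 : y ≤ 1)
    (hr0 : 0 < r) (hr1 : r ≤ 1) (hε0 : 0 < ε) (hε1 : ε < 1) (hyε : y < 1 - ε) :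
    (1 - ε ^ 2) * (Hfun y r ε - Hfun y r (-ε)) =
        2 * ∑' k : ℕ,
          Cser r y (2 * (k + 1) + 1) * ((1 - y) ^ (2 * (k + 1)))⁻¹ * ε ^ (2 * (k + 1) + 1) ∧
      (∀ r' y' : ℝ, ∀ ℓ : ℕ, 0 ≤ r' → r' ≤ 1 → 0 ≤ y' → y' ≤ 1 → 2 < ℓ →
        0 ≤ Cser r' y' ℓ) ∧
      Hfun y r (-ε) ≤ Hfun y r ε := by
  have hA : 0 < 1 - y := by linarith
  have HG := Gaux_hasSum y r ε hy0 hr0 hr1 hε0 hε1 hyε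
  have hinj : Function.Injective (fun k : ℕ => 2 * (k + 1) + 1) := by
    intro a b h
    simp only [] at h
    omega
  have Hcomp := (Function.Injective.hasSum_iff hinj (Gaux_vanish r y ε hA.ne')).mpr HG
  have Hfin : HasSum
      (fun k : ℕ => 2 * (Cser r y (2 * (k + 1) + 1) * ((1 - y) ^ (2 * (k + 1)))⁻¹
        * ε ^ (2 * (k + 1) + 1)))
      ((1 - ε ^ 2) * (Hfun y r ε - Hfun y r (-ε))) :=
    Hcomp.congr_fun fun k => (Gaux_odd r y ε hA.ne' k).symm
  have e1 := Hfin.tsum_eq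
  rw [tsum_mul_left] at e1
  refine ⟨e1.symm, fun r' y' ℓ a b c d e => Cser_nonneg r' y' ℓ a b c d e, ?_⟩
  have ht : 0 ≤ ∑' k : ℕ,
      Cser r y (2 * (k + 1) + 1) * ((1 - y) ^ (2 * (k + 1)))⁻¹ * ε ^ (2 * (k + 1) + 1) := by
    apply tsum_nonneg
    intro k
    apply mul_nonneg (mul_nonneg ?_ (by positivity)) (by positivity)
    exact Cser_nonneg r y (2 * (k + 1) + 1) hr0.le hr1 hy0.le hy1 (by omega)
  have hpos : 0 < 1 - ε ^ 2 := by nlinarith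
  have h0 : 0 ≤ (1 - ε ^ 2) * (Hfun y r ε - Hfun y r (-ε)) := by
    rw [e1.symm]; linarith
  have := (mul_nonneg_iff_of_pos_left hpos).mp h0
  linarith
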